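/- arXiv:0712.3649 — 4 statements merged into one kernel-verified Lean document; each statement's English description precedes it below -/
import Mathlib

section
/- The generating series B(t) of nonempty Motzkin bridges (walks with steps in {-1,0,+1} and total increment 0), counted by length, satisfies B = t(1 + 2U)(1 + B), where U is the series of primitive Motzkin walks satisfying U = t(1 + U + U^2); consequently B = U(1 + 2U)/(1 - U^2) and 1 + B = (1 + U + U^2)/(1 - U^2) = 1/sqrt(1 - 2t - 3t^2). -/
open PowerSeries

/-- A Motzkin walk: a finite sequence of steps in `{-1, 0, +1}`. -/
def IsMotzkin (w : List ℤ) : Prop := ∀ x ∈ w, x = -1 ∨ x = 0 ∨ x = 1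

/-- The increment of a walk: the sum of its steps. -/
def increment (w : List ℤ) : ℤ := w.sum

/-- A Motzkin walk is primitive if its increment is `-1` while every proper prefix
has nonnegative increment. -/
def IsPrimitive (w : List ℤ) : Prop :=
  increment w = -1 ∧ ∀ k < w.length, 0 ≤ increment (w.take k)

/-- The generating series of nonempty primitive Motzkin walks, by length. -/
noncomputable def U : PowerSeries ℚ :=
  PowerSeries.mk fun n =>
    (Nat.card {w : List ℤ // IsMotzkin w ∧ IsPrimitive w ∧ w.length = n ∧ w ≠ []} : ℚ)

/-- The generating series of nonempty Motzkin bridges (walks of increment `0`),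
by length. -/
noncomputable def B : PowerSeries ℚ :=
  PowerSeries.mk fun n =>
    (Nat.card {w : List ℤ // IsMotzkin w ∧ increment w = 0 ∧ w.length = n ∧ w ≠ []} : ℚ)

/-- The generating series of Motzkin walks of increment `i`, by length. -/
noncomputable def M (i : ℤ) : PowerSeries ℚ :=
  PowerSeries.mk fun n =>
    (Nat.card {w : List ℤ // IsMotzkin w ∧ increment w = i ∧ w.length = n} : ℚ)

namespace MotzkinAux

open Finset

instance : DecidablePred IsMotzkin := fun w =>
  inferInstanceAs (Decidable (∀ x ∈ w, x = -1 ∨ x = 0 ∨ x = 1))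

instance : DecidablePred IsPrimitive := fun w =>
  inferInstanceAs (Decidable (_ ∧ ∀ k < w.length, _))

/-- Motzkin walks of length `n` as a Finset. -/
def MF : ℕ → Finset (List ℤ)
  | 0 => {[]}
  | n+1 => (({-1,0,1} : Finset ℤ) ×ˢ MF n).image fun p => p.1 :: p.2

lemma mem_MF {w : List ℤ} {n : ℕ} : w ∈ MF n ↔ IsMotzkin w ∧ w.length = n := by
  induction n generalizing w with
  | zero =>
    simp only [MF, mem_singleton]
    constructor
    · rintro rfl; exact ⟨by intro x hx; simp at hx, rfl⟩
    · rintro ⟨-, h⟩; exact List.length_eq_zero_iff.mp h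
  | succ n ih =>
    simp only [MF, mem_image, mem_product, mem_insert, mem_singleton, Prod.exists]
    constructor
    · rintro ⟨s, t, ⟨hs, ht⟩, rfl⟩
      obtain ⟨hm, hl⟩ := ih.mp ht
      refine ⟨?_, by simp [hl]⟩
      intro x hx
      rcases List.mem_cons.mp hx with rfl | hx
      · tauto
      · exact hm x hx
    · rintro ⟨hm, hl⟩
      cases w with
      | nil => simp at hl
      | cons s t =>
        refine ⟨s, t, ⟨?_, ih.mpr ⟨fun x hx => hm x (List.mem_cons_of_mem _ hx), by simpa using hl⟩⟩, rfl⟩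
        have := hm s List.mem_cons_self
        tauto

/-- number of Motzkin walks of length n with increment i -/
def a (i : ℤ) (n : ℕ) : ℕ := ((MF n).filter fun w => increment w = i).card

/-- number of primitive Motzkin walks of length n -/
def pr (n : ℕ) : ℕ := ((MF n).filter fun w => IsPrimitive w).card

lemma increment_nil : increment ([] : List ℤ) = 0 := rfl
lemma increment_cons (s : ℤ) (t : List ℤ) : increment (s :: t) = s + increment t := by
  simp [increment]
lemma increment_append (u v : List ℤ) : increment (u ++ v) = increment u + increment v :=
  List.sum_append

lemma a_zero_zero : a 0 0 = 1 := by decide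
lemma pr_zero : pr 0 = 0 := by decide

lemma increment_take_append (u v : List ℤ) (j : ℕ) :
    increment ((u ++ v).take j) = increment (u.take j) + increment (v.take (j - u.length)) := by
  rw [List.take_append, increment_append]

lemma inc_take_lb {w : List ℤ} (hw : IsMotzkin w) (j : ℕ) :
    increment (w.take j) - 1 ≤ increment (w.take (j+1)) := by
  rcases lt_or_ge j w.length with h | h
  · rw [List.take_succ]
    have hj : w[j]? = some w[j] := List.getElem?_eq_getElem h
    rw [hj]
    simp only [Option.toList_some, increment_append]
    have hx : w[j] = -1 ∨ w[j] = 0 ∨ w[j] = 1 := hw _ (List.getElem_mem h)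
    have : (-1 : ℤ) ≤ w[j] := by rcases hx with h|h|h <;> simp [h]
    have : increment [w[j]] = w[j] := by simp [increment]
    omega
  · rw [List.take_of_length_le h, List.take_of_length_le (by omega)]; omega

/-- primitive walks have prefix increments ≥ -1 everywhere -/
lemma primitive_take_ge {p : List ℤ} (hp : IsPrimitive p) (j : ℕ) :
    -1 ≤ increment (p.take j) := by
  rcases lt_or_ge j p.length with h | h
  · linarith [hp.2 j h]
  · rw [List.take_of_length_le h, hp.1]

end MotzkinAux
namespace MotzkinAux

open Finset

open Classical in
/-- first passage time to -1 -/
noncomputable def fp (w : List ℤ) : ℕ :=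
  if h : ∃ j, increment (w.take j) ≤ -1 then Nat.find h else 0

lemma fp_exists {w : List ℤ} (h : increment w ≤ -1) : ∃ j, increment (w.take j) ≤ -1 :=
  ⟨w.length, by rwa [List.take_length]⟩

lemma fp_le {w : List ℤ} (h : increment w ≤ -1) : fp w ≤ w.length := by
  rw [fp, dif_pos (fp_exists h)]
  exact Nat.find_le (by rwa [List.take_length])

lemma fp_primitive {w : List ℤ} (hw : IsMotzkin w) (h : increment w ≤ -1) :
    IsPrimitive (w.take (fp w)) := by
  have hex := fp_exists h
  rw [fp, dif_pos hex]
  have hspec : increment (w.take (Nat.find hex)) ≤ -1 := Nat.find_spec hex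
  have hmin : ∀ j < Nat.find hex, 0 ≤ increment (w.take j) := fun j hj => by
    have := Nat.find_min hex hj; omega
  constructor
  · rcases Nat.eq_zero_or_pos (Nat.find hex) with h0 | h0
    · rw [h0] at hspec; simp [increment_nil] at hspec
    · have h1 := hmin (Nat.find hex - 1) (by omega)
      have h2 := inc_take_lb hw (Nat.find hex - 1)
      have h3 : Nat.find hex - 1 + 1 = Nat.find hex := by omega
      rw [h3] at h2
      omega
  · intro j hj
    have hjk : j < Nat.find hex := lt_of_lt_of_le hj (by simp [List.length_take])
    rw [List.take_take, min_eq_left (le_of_lt hjk)]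
    exact hmin j hjk

lemma primitive_prefix_unique {w : List ℤ} {k k' : ℕ} (hk : k ≤ w.length) (hk' : k' ≤ w.length)
    (h : IsPrimitive (w.take k)) (h' : IsPrimitive (w.take k')) : k = k' := by
  by_contra hne
  wlog hlt : k < k' generalizing k k'
  · exact this hk' hk h' h (Ne.symm hne) (by omega)
  have hlen : (w.take k').length = k' := by simp [List.length_take, min_eq_left hk']
  have := h'.2 k (by omega)
  rw [List.take_take, min_eq_left (le_of_lt hlt)] at this
  rw [h.1] at this
  omega

lemma fp_eq {w : List ℤ} (h : increment w ≤ -1) {k : ℕ} (hk : k ≤ w.length)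
    (hp : IsPrimitive (w.take k)) (hw : IsMotzkin w) : fp w = k :=
  primitive_prefix_unique (fp_le h) hk (fp_primitive hw h) hp

lemma increment_drop (w : List ℤ) (k : ℕ) :
    increment (w.drop k) = increment w - increment (w.take k) := by
  have := increment_append (w.take k) (w.drop k)
  rw [List.take_append_drop] at this
  omega

end MotzkinAux
namespace MotzkinAux

open Finset

lemma increment_map_neg (w : List ℤ) : increment (w.map fun x => -x) = - increment w := by
  induction w with
  | nil => rfl
  | cons s t ih => simp [increment_cons, ih]; ring

/-- K3: negation symmetry -/
lemma a_neg (i : ℤ) (n : ℕ) : a i n = a (-i) n := by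
  unfold a
  refine Finset.card_bij' (fun w _ => w.map (fun x => -x)) (fun w _ => w.map (fun x => -x)) ?_ ?_ ?_ ?_
  · intro w hw
    rw [mem_filter, mem_MF] at hw ⊢
    obtain ⟨⟨hm, hl⟩, hi⟩ := hw
    refine ⟨⟨?_, by simp [hl]⟩, by rw [increment_map_neg, hi]⟩
    intro x hx
    obtain ⟨y, hy, rfl⟩ := List.mem_map.mp hx
    have := hm y hy; omega
  · intro w hw
    rw [mem_filter, mem_MF] at hw ⊢
    obtain ⟨⟨hm, hl⟩, hi⟩ := hw
    refine ⟨⟨?_, by simp [hl]⟩, by rw [increment_map_neg, hi]; ring⟩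
    intro x hx
    obtain ⟨y, hy, rfl⟩ := List.mem_map.mp hx
    have := hm y hy; omega
  · intro w _; simp [List.map_map, Function.comp_def, neg_neg, List.map_id]
  · intro w _; simp [List.map_map, Function.comp_def, neg_neg, List.map_id]

def consSet (s : ℤ) (t : Finset (List ℤ)) : Finset (List ℤ) := t.image (s :: ·)

lemma mem_consSet {s : ℤ} {t : Finset (List ℤ)} {w : List ℤ} :
    w ∈ consSet s t ↔ ∃ u ∈ t, w = s :: u := by
  simp [consSet, eq_comm]

lemma card_consSet (s : ℤ) (t : Finset (List ℤ)) : (consSet s t).card = t.card :=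
  Finset.card_image_of_injective _ List.cons_injective

lemma disjoint_consSet {s s' : ℤ} (h : s ≠ s') (t t' : Finset (List ℤ)) :
    Disjoint (consSet s t) (consSet s' t') := by
  rw [Finset.disjoint_left]
  rintro w hw hw'
  obtain ⟨u, _, rfl⟩ := mem_consSet.mp hw
  obtain ⟨u', _, h'⟩ := mem_consSet.mp hw'
  exact h (by injection h')

/-- K4: splitting by head -/
lemma a_succ (i : ℤ) (n : ℕ) : a i (n+1) = a (i+1) n + a i n + a (i-1) n := by
  have hset : (MF (n+1)).filter (fun w => increment w = i) =
      consSet (-1) ((MF n).filter (fun w => increment w = i + 1)) ∪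
      consSet 0 ((MF n).filter (fun w => increment w = i)) ∪
      consSet 1 ((MF n).filter (fun w => increment w = i - 1)) := by
    ext w
    simp only [mem_filter, mem_MF, mem_union, mem_consSet]
    constructor
    · rintro ⟨⟨hm, hl⟩, hi⟩
      cases w with
      | nil => simp at hl
      | cons s t =>
        have hs := hm s List.mem_cons_self
        have hm' : IsMotzkin t := fun x hx => hm x (List.mem_cons_of_mem _ hx)
        have hl' : t.length = n := by simpa using hl
        rw [increment_cons] at hi
        rcases hs with rfl | rfl | rfl
        · exact Or.inl (Or.inl ⟨t, ⟨⟨hm', hl'⟩, by omega⟩, rfl⟩)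
        · exact Or.inl (Or.inr ⟨t, ⟨⟨hm', hl'⟩, by omega⟩, rfl⟩)
        · exact Or.inr ⟨t, ⟨⟨hm', hl'⟩, by omega⟩, rfl⟩
    · rintro ((⟨u, ⟨⟨hm, hl⟩, hi⟩, rfl⟩ | ⟨u, ⟨⟨hm, hl⟩, hi⟩, rfl⟩) | ⟨u, ⟨⟨hm, hl⟩, hi⟩, rfl⟩) <;>
      · refine ⟨⟨?_, by simp [hl]⟩, by rw [increment_cons, hi]; ring⟩
        intro x hx
        rcases List.mem_cons.mp hx with rfl | hx
        · omega
        · exact hm x hx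
  rw [a, hset, Finset.card_union_of_disjoint, Finset.card_union_of_disjoint,
    card_consSet, card_consSet, card_consSet]
  · rfl
  · exact disjoint_consSet (by norm_num) _ _
  · exact Finset.disjoint_union_left.mpr
      ⟨disjoint_consSet (by norm_num) _ _, disjoint_consSet (by norm_num) _ _⟩

end MotzkinAux
namespace MotzkinAux

open Finset

lemma motzkin_append {p q : List ℤ} (hp : IsMotzkin p) (hq : IsMotzkin q) :
    IsMotzkin (p ++ q) := by
  intro x hx
  rcases List.mem_append.mp hx with h | h
  · exact hp x h
  · exact hq x h

lemma motzkin_take (w : List ℤ) (hw : IsMotzkin w) (k : ℕ) : IsMotzkin (w.take k) :=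
  fun x hx => hw x (List.take_subset k w hx)

lemma motzkin_drop (w : List ℤ) (hw : IsMotzkin w) (k : ℕ) : IsMotzkin (w.drop k) :=
  fun x hx => hw x (List.drop_subset k w hx)

/-- K2: decomposition of increment `-1` walks at first passage. -/
lemma a_neg_one_eq (m : ℕ) : a (-1) m = ∑ k ∈ range (m+1), pr k * a 0 (m - k) := by
  have hcard : ∑ k ∈ range (m+1), pr k * a 0 (m - k) =
      ((range (m+1)).sigma fun k =>
        ((MF k).filter fun w => IsPrimitive w) ×ˢ ((MF (m-k)).filter fun w => increment w = 0)).card := by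
    rw [Finset.card_sigma]
    exact Finset.sum_congr rfl fun k _ => by rw [Finset.card_product]; rfl
  rw [hcard, a]
  refine (Finset.card_bij' (fun x _ => x.2.1 ++ x.2.2)
    (fun w _ => ⟨fp w, (w.take (fp w), w.drop (fp w))⟩) ?_ ?_ ?_ ?_).symm
  · rintro ⟨k, p, q⟩ hx
    simp only [Finset.mem_sigma, Finset.mem_range, Finset.mem_product, mem_filter, mem_MF] at hx
    obtain ⟨hk, ⟨⟨hpm, hpl⟩, hpp⟩, ⟨⟨hqm, hql⟩, hqi⟩⟩ := hx
    simp only [mem_filter, mem_MF]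
    refine ⟨⟨motzkin_append hpm hqm, ?_⟩, ?_⟩
    · rw [List.length_append, hpl, hql]; omega
    · rw [increment_append, hpp.1, hqi]; ring
  · intro w hw
    rw [mem_filter, mem_MF] at hw
    obtain ⟨⟨hm, hl⟩, hi⟩ := hw
    have hle : increment w ≤ -1 := by omega
    have hfl := fp_le hle
    have hfp := fp_primitive hm hle
    simp only [Finset.mem_sigma, Finset.mem_range, Finset.mem_product, mem_filter, mem_MF]
    refine ⟨by omega, ⟨⟨motzkin_take w hm _, ?_⟩, hfp⟩, ⟨motzkin_drop w hm _, ?_⟩, ?_⟩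
    · rw [List.length_take]; omega
    · rw [List.length_drop]; omega
    · rw [increment_drop, hfp.1, hi]; ring
  · rintro ⟨k, p, q⟩ hx
    simp only [Finset.mem_sigma, Finset.mem_range, Finset.mem_product, mem_filter, mem_MF] at hx
    obtain ⟨hk, ⟨⟨hpm, hpl⟩, hpp⟩, ⟨⟨hqm, hql⟩, hqi⟩⟩ := hx
    have hinc : increment (p ++ q) ≤ -1 := by
      rw [increment_append, hpp.1, hqi]; norm_num
    have htake : (p ++ q).take p.length = p := List.take_left
    have hfpeq : fp (p ++ q) = p.length := by
      refine fp_eq hinc ?_ (by rw [htake]; exact hpp) (motzkin_append hpm hqm)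
      rw [List.length_append]; omega
    have hk' : fp (p ++ q) = k := by rw [hfpeq, hpl]
    simp only [hfpeq, htake, List.drop_left]
    exact Sigma.ext (by rw [hpl]) (by rw [hpl])
  · intro w _
    simp [List.take_append_drop]

/-- primitivity of `0 :: t` -/
lemma primitive_cons_zero {t : List ℤ} : IsPrimitive (0 :: t) ↔ IsPrimitive t := by
  constructor
  · rintro ⟨h1, h2⟩
    rw [increment_cons] at h1
    refine ⟨by omega, fun j hj => ?_⟩
    have := h2 (j+1) (by simpa using Nat.succ_lt_succ hj)
    rwa [List.take_succ_cons, increment_cons, zero_add] at this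
  · rintro ⟨h1, h2⟩
    refine ⟨by rw [increment_cons, h1]; ring, fun j hj => ?_⟩
    cases j with
    | zero => simp [increment_nil]
    | succ j' =>
      rw [List.take_succ_cons, increment_cons, zero_add]
      exact h2 j' (by simpa using Nat.lt_of_succ_lt_succ hj)

/-- primitivity of `-1 :: t` -/
lemma primitive_cons_neg_one {t : List ℤ} : IsPrimitive (-1 :: t) ↔ t = [] := by
  constructor
  · rintro ⟨h1, h2⟩
    by_contra hne
    have hlen : 1 < (-1 :: t).length := by
      cases t with
      | nil => exact absurd rfl hne
      | cons a u => simp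
    have := h2 1 hlen
    simp [List.take_succ_cons, increment_cons, increment_nil] at this
  · rintro rfl
    refine ⟨by simp [increment_cons, increment_nil], fun j hj => ?_⟩
    have hj0 : j = 0 := by simp at hj; omega
    subst hj0
    simp [increment_nil]

lemma primitive_one_append {p q : List ℤ} (hp : IsPrimitive p) (hq : IsPrimitive q) :
    IsPrimitive (1 :: (p ++ q)) := by
  constructor
  · rw [increment_cons, increment_append, hp.1, hq.1]; ring
  · intro j hj
    cases j with
    | zero => simp [increment_nil]
    | succ j' =>
      rw [List.take_succ_cons, increment_cons, increment_take_append]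
      have hpj := primitive_take_ge hp j'
      rcases le_or_gt j' p.length with hc | hc
      · rw [Nat.sub_eq_zero_of_le hc]
        simp only [List.take_zero, increment_nil]
        omega
      · rw [List.take_of_length_le (le_of_lt hc), hp.1]
        have hql : j' - p.length < q.length := by
          simp only [List.length_cons, List.length_append] at hj; omega
        have := hq.2 _ hql
        omega

lemma primitive_one_drop {t : List ℤ} (hm : IsMotzkin t) (h1 : IsPrimitive (1 :: t)) :
    IsPrimitive (t.drop (fp t)) := by
  have hinc : increment t = -2 := by
    have := h1.1; rw [increment_cons] at this; omega
  have hle : increment t ≤ -1 := by omega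
  have hk := fp_le hle
  have hpk := fp_primitive hm hle
  constructor
  · rw [increment_drop, hpk.1, hinc]; ring
  · intro j hj
    rw [List.length_drop] at hj
    have key : t.take (fp t + j) = t.take (fp t) ++ (t.drop (fp t)).take j := List.take_add
    have heq : increment ((t.drop (fp t)).take j) =
        increment (t.take (fp t + j)) - increment (t.take (fp t)) := by
      rw [key, increment_append]; ring
    have hlt : fp t + j + 1 < (1 :: t).length := by simp; omega
    have h2 := h1.2 _ hlt
    rw [List.take_succ_cons, increment_cons] at h2
    rw [heq, hpk.1]
    omega

/-- K1: recurrence for primitive walks -/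
lemma pr_succ (n : ℕ) :
    pr (n+1) = (if n = 0 then 1 else 0) + pr n + ∑ k ∈ range (n+1), pr k * pr (n - k) := by
  have hset : (MF (n+1)).filter (fun w => IsPrimitive w) =
      consSet (-1) ((MF n).filter fun w => w = []) ∪
      consSet 0 ((MF n).filter fun w => IsPrimitive w) ∪
      consSet 1 ((MF n).filter fun w => IsPrimitive (1 :: w)) := by
    ext w
    simp only [mem_filter, mem_MF, mem_union, mem_consSet]
    constructor
    · rintro ⟨⟨hm, hl⟩, hp⟩
      cases w with
      | nil => simp at hl
      | cons s t =>
        have hs := hm s List.mem_cons_self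
        have hm' : IsMotzkin t := fun x hx => hm x (List.mem_cons_of_mem _ hx)
        have hl' : t.length = n := by simpa using hl
        rcases hs with rfl | rfl | rfl
        · exact Or.inl (Or.inl ⟨t, ⟨⟨hm', hl'⟩, primitive_cons_neg_one.mp hp⟩, rfl⟩)
        · exact Or.inl (Or.inr ⟨t, ⟨⟨hm', hl'⟩, primitive_cons_zero.mp hp⟩, rfl⟩)
        · exact Or.inr ⟨t, ⟨⟨hm', hl'⟩, hp⟩, rfl⟩
    · have hmk : ∀ (s : ℤ) u, (s = -1 ∨ s = 0 ∨ s = 1) → IsMotzkin u → u.length = n →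
          IsMotzkin (s :: u) ∧ (s :: u).length = n + 1 := by
        intro s u hs hu hul
        refine ⟨fun x hx => ?_, by simp [hul]⟩
        rcases List.mem_cons.mp hx with rfl | hx
        · exact hs
        · exact hu x hx
      rintro ((⟨u, ⟨⟨hm, hl⟩, rfl⟩, rfl⟩ | ⟨u, ⟨⟨hm, hl⟩, hp⟩, rfl⟩) | ⟨u, ⟨⟨hm, hl⟩, hp⟩, rfl⟩)
      · exact ⟨hmk _ _ (by omega) hm hl, primitive_cons_neg_one.mpr rfl⟩
      · exact ⟨hmk _ _ (by omega) hm hl, primitive_cons_zero.mpr hp⟩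
      · exact ⟨hmk _ _ (by omega) hm hl, hp⟩
  have hnil : ((MF n).filter fun w => w = []).card = if n = 0 then 1 else 0 := by
    cases n with
    | zero => decide
    | succ n' =>
      rw [if_neg (Nat.succ_ne_zero n')]
      rw [Finset.card_eq_zero, Finset.filter_eq_empty_iff]
      rintro w hw rfl
      rw [mem_MF] at hw
      simp at hw
  have hone : ((MF n).filter fun w => IsPrimitive (1 :: w)).card =
      ∑ k ∈ range (n+1), pr k * pr (n - k) := by
    have hcard : ∑ k ∈ range (n+1), pr k * pr (n - k) =
        ((range (n+1)).sigma fun k =>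
          ((MF k).filter fun w => IsPrimitive w) ×ˢ ((MF (n-k)).filter fun w => IsPrimitive w)).card := by
      rw [Finset.card_sigma]
      exact Finset.sum_congr rfl fun k _ => by rw [Finset.card_product]; rfl
    rw [hcard]
    refine Finset.card_bij' (fun w _ => ⟨fp w, (w.take (fp w), w.drop (fp w))⟩)
      (fun x _ => x.2.1 ++ x.2.2) ?_ ?_ ?_ ?_
    · intro w hw
      rw [mem_filter, mem_MF] at hw
      obtain ⟨⟨hm, hl⟩, hp⟩ := hw
      have hinc : increment w = -2 := by
        have := hp.1; rw [increment_cons] at this; omega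
      have hle : increment w ≤ -1 := by omega
      have hfl := fp_le hle
      have hfp := fp_primitive hm hle
      simp only [Finset.mem_sigma, Finset.mem_range, Finset.mem_product, mem_filter, mem_MF]
      refine ⟨by omega, ⟨⟨motzkin_take w hm _, ?_⟩, hfp⟩,
        ⟨motzkin_drop w hm _, ?_⟩, primitive_one_drop hm hp⟩
      · rw [List.length_take]; omega
      · rw [List.length_drop]; omega
    · rintro ⟨k, p, q⟩ hx
      simp only [Finset.mem_sigma, Finset.mem_range, Finset.mem_product, mem_filter, mem_MF] at hx
      obtain ⟨hk, ⟨⟨hpm, hpl⟩, hpp⟩, ⟨⟨hqm, hql⟩, hqp⟩⟩ := hx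
      simp only [mem_filter, mem_MF]
      refine ⟨⟨motzkin_append hpm hqm, ?_⟩, ?_⟩
      · rw [List.length_append, hpl, hql]; omega
      · have := primitive_one_append hpp hqp
        exact this
    · intro w hw
      simp [List.take_append_drop]
    · rintro ⟨k, p, q⟩ hx
      simp only [Finset.mem_sigma, Finset.mem_range, Finset.mem_product, mem_filter, mem_MF] at hx
      obtain ⟨hk, ⟨⟨hpm, hpl⟩, hpp⟩, ⟨⟨hqm, hql⟩, hqp⟩⟩ := hx
      have hinc : increment (p ++ q) ≤ -1 := by
        rw [increment_append, hpp.1, hqp.1]; norm_num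
      have htake : (p ++ q).take p.length = p := List.take_left
      have hfpeq : fp (p ++ q) = p.length := by
        refine fp_eq hinc ?_ (by rw [htake]; exact hpp) (motzkin_append hpm hqm)
        rw [List.length_append]; omega
      simp only [hfpeq, htake, List.drop_left]
      exact Sigma.ext (by rw [hpl]) (by rw [hpl])
  rw [pr, hset, Finset.card_union_of_disjoint, Finset.card_union_of_disjoint,
    card_consSet, card_consSet, card_consSet, hnil, hone]
  · rfl
  · exact disjoint_consSet (by norm_num) _ _
  · exact Finset.disjoint_union_left.mpr
      ⟨disjoint_consSet (by norm_num) _ _, disjoint_consSet (by norm_num) _ _⟩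

end MotzkinAux
namespace MotzkinAux

open Finset PowerSeries

lemma nat_card_eq {p : List ℤ → Prop} {s : Finset (List ℤ)} (h : ∀ w, p w ↔ w ∈ s) :
    Nat.card {w : List ℤ // p w} = s.card := by
  rw [Nat.card_congr (Equiv.subtypeEquivRight h), Nat.card_eq_finsetCard]

lemma U_coeff (n : ℕ) : coeff n U = (pr n : ℚ) := by
  rw [U, coeff_mk]
  congr 1
  refine nat_card_eq fun w => ?_
  rw [mem_filter, mem_MF]
  constructor
  · rintro ⟨hm, hp, hl, -⟩; exact ⟨⟨hm, hl⟩, hp⟩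
  · rintro ⟨⟨hm, hl⟩, hp⟩
    refine ⟨hm, hp, hl, ?_⟩
    rintro rfl
    have := hp.1
    simp [increment_nil] at this

lemma B_coeff_zero : coeff 0 B = 0 := by
  rw [B, coeff_mk]
  norm_cast
  rw [Nat.card_eq_zero]
  exact Or.inl ⟨fun ⟨w, _, _, hl, hne⟩ => hne (List.length_eq_zero_iff.mp hl)⟩

lemma B_coeff_succ (n : ℕ) : coeff (n+1) B = (a 0 (n+1) : ℚ) := by
  rw [B, coeff_mk]
  congr 1
  refine nat_card_eq fun w => ?_
  rw [mem_filter, mem_MF]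
  constructor
  · rintro ⟨hm, hi, hl, -⟩; exact ⟨⟨hm, hl⟩, hi⟩
  · rintro ⟨⟨hm, hl⟩, hi⟩
    refine ⟨hm, hi, hl, ?_⟩
    rintro rfl
    simp at hl

lemma one_add_B_coeff (n : ℕ) : coeff n (1 + B) = (a 0 n : ℚ) := by
  rw [map_add]
  cases n with
  | zero => rw [B_coeff_zero, a_zero_zero]; simp
  | succ m => rw [B_coeff_succ, coeff_one, if_neg (Nat.succ_ne_zero m)]; ring

/-- the algebraic equation for U -/
lemma U_eq : U = X * (1 + U + U ^ 2) := by
  ext n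
  cases n with
  | zero =>
    rw [U_coeff, pr_zero]
    simp [coeff_zero_eq_constantCoeff, map_mul]
  | succ n =>
    rw [coeff_succ_X_mul, U_coeff, map_add, map_add, coeff_one, U_coeff, sq, coeff_mul,
      Finset.Nat.sum_antidiagonal_eq_sum_range_succ_mk]
    have hs : ∀ k ∈ range (n+1), coeff k U * coeff (n-k) U = ((pr k : ℚ) * (pr (n-k) : ℚ)) :=
      fun k _ => by rw [U_coeff, U_coeff]
    rw [Finset.sum_congr rfl hs, pr_succ]
    push_cast [apply_ite (Nat.cast : ℕ → ℚ)]
    ring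

/-- the algebraic equation for B -/
lemma B_eq : B = X * (1 + 2 * U) * (1 + B) := by
  ext n
  cases n with
  | zero =>
    rw [B_coeff_zero]
    simp [coeff_zero_eq_constantCoeff, map_mul]
  | succ n =>
    rw [mul_assoc, coeff_succ_X_mul, B_coeff_succ, coeff_mul,
      Finset.Nat.sum_antidiagonal_eq_sum_range_succ_mk]
    have hterm : ∀ k ∈ range (n+1), coeff k (1 + 2 * U) * coeff (n - k) (1 + B) =
        (if k = 0 then (a 0 (n - k) : ℚ) else 0) + 2 * pr k * a 0 (n - k) := by
      intro k _
      rw [show (1 + 2 * U : PowerSeries ℚ) = 1 + U + U by ring, map_add, map_add, coeff_one,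
        U_coeff, one_add_B_coeff]
      split_ifs <;> ring
    rw [Finset.sum_congr rfl hterm, Finset.sum_add_distrib, Finset.sum_ite_eq' (range (n+1)) 0
      (fun k => (a 0 (n - k) : ℚ)), if_pos (Finset.mem_range.mpr (Nat.succ_pos n))]
    have lhs : a 0 (n+1) = a 0 n + 2 * ∑ k ∈ range (n+1), pr k * a 0 (n - k) := by
      have h1 := a_succ 0 n
      have h2 : a (0 + 1) n = a (-1) n := by
        rw [show (0:ℤ)+1 = 1 by ring, a_neg 1 n]
      have h3 : a (0 - 1 : ℤ) n = a (-1) n := by norm_num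
      rw [h1, h2, h3, a_neg_one_eq]
      ring
    rw [lhs]
    push_cast
    simp only [Nat.sub_zero]
    rw [Finset.mul_sum]
    congr 1
    exact Finset.sum_congr rfl fun k _ => by ring

lemma constantCoeff_U : constantCoeff U = 0 := by
  have := U_coeff 0
  rw [pr_zero, coeff_zero_eq_constantCoeff] at this
  simpa using this

end MotzkinAux

/-- The generating series `B(t)` of nonempty Motzkin bridges satisfies
`B = t (1 + 2U)(1 + B)`; consequently `B = U(1 + 2U)/(1 - U^2)`,
`1 + B = (1 + U + U^2)/(1 - U^2)`, and `1 + B = 1/sqrt(1 - 2t - 3t^2)` (the last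
identity stated as `(1+B)^2 (1 - 2t - 3t^2) = 1`). -/
theorem stmt_9 :
    B = X * (1 + 2 * U) * (1 + B) ∧
    B * (1 - U ^ 2) = U * (1 + 2 * U) ∧
    (1 + B) * (1 - U ^ 2) = 1 + U + U ^ 2 ∧
    (1 + B) ^ 2 * (1 - 2 * X - 3 * X ^ 2) = 1 := by
  have hU := MotzkinAux.U_eq
  have hB := MotzkinAux.B_eq
  have h2 : B * (1 - U ^ 2) = U * (1 + 2 * U) := by
    linear_combination (1 + U + U^2) * hB - (1 + 2*U) * (1 + B) * hU
  have h3 : (1 + B) * (1 - U ^ 2) = 1 + U + U ^ 2 := by linear_combination h2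
  refine ⟨hB, h2, h3, ?_⟩
  have hC2 : (1 - U ^ 2) ^ 2 = (1 - 2 * X - 3 * X ^ 2) * (1 + U + U ^ 2) ^ 2 := by
    linear_combination (-(2*(1 + U + U^2)) - 3*(U + X*(1 + U + U^2))) * hU
  have hD : (1 + U + U ^ 2) ≠ 0 := by
    intro h
    have := congrArg (PowerSeries.constantCoeff) h
    simp [MotzkinAux.constantCoeff_U] at this
  have key : ((1 + B) ^ 2 * (1 - 2 * X - 3 * X ^ 2)) * (1 + U + U ^ 2) ^ 2 =
      1 * (1 + U + U ^ 2) ^ 2 := by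
    linear_combination ((1 + B) * (1 - U^2) + (1 + U + U^2)) * h3 - (1+B)^2 * hC2
  exact mul_right_cancel₀ (pow_ne_zero 2 hD) key
end

section
/- For every integer i >= 1, the generating series M_i(t) of Motzkin walks of increment i, counted by length, equals (1 + B(t)) * U(t)^i, where B is the bridge series and U the primitive walk series. -/
open PowerSeries

/-! ### Auxiliary material -/

abbrev Pt (k : ℕ) := {w : List ℤ // IsMotzkin w ∧ IsPrimitive w ∧ w.length = k ∧ w ≠ []}
abbrev Wt (i : ℤ) (n : ℕ) := {w : List ℤ // IsMotzkin w ∧ increment w = i ∧ w.length = n}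

lemma finite_motzkin (n : ℕ) : {l : List ℤ | IsMotzkin l ∧ l.length = n}.Finite := by
  induction n with
  | zero =>
      apply Set.Finite.subset (Set.finite_singleton ([] : List ℤ))
      rintro l ⟨-, hl⟩
      simp [List.length_eq_zero_iff.mp hl]
  | succ n ih =>
      have hS : ({-1, 0, 1} : Set ℤ).Finite := Set.toFinite _
      apply Set.Finite.subset (((hS.prod ih).image fun p : ℤ × List ℤ => p.1 :: p.2))
      rintro l ⟨hm, hl⟩
      cases l with
      | nil => simp at hl
      | cons a t =>
          refine ⟨(a, t), ⟨?_, fun x hx => hm x (List.mem_cons_of_mem a hx), by simpa using hl⟩, rfl⟩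
          rcases hm a List.mem_cons_self with h | h | h <;> simp [h]

instance fin_Wt (i : ℤ) (n : ℕ) : Finite (Wt i n) :=
  ((finite_motzkin n).subset fun w hw => ⟨hw.1, hw.2.2⟩).to_subtype

instance fin_Pt (k : ℕ) : Finite (Pt k) :=
  ((finite_motzkin k).subset fun w hw => ⟨hw.1, hw.2.2.1⟩).to_subtype

instance fin_Bt (n : ℕ) :
    Finite {w : List ℤ // IsMotzkin w ∧ increment w = 0 ∧ w.length = n ∧ w ≠ []} :=
  ((finite_motzkin n).subset fun w hw => ⟨hw.1, hw.2.2.1⟩).to_subtype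

lemma increment_map_neg (w : List ℤ) : increment (w.map fun x => -x) = -increment w := by
  unfold increment
  induction w with
  | nil => simp
  | cons a t ih => simp [ih]; ring

/-- Negating every step gives a bijection between walks of increment `i` and `-i`. -/
noncomputable def negEquiv (i : ℤ) (n : ℕ) : Wt i n ≃ Wt (-i) n where
  toFun w := ⟨w.1.map fun x => -x, by
    obtain ⟨w, hm, hinc, hlen⟩ := w
    refine ⟨?_, ?_, by simp [hlen]⟩
    · intro x hx
      obtain ⟨y, hy, rfl⟩ := List.mem_map.mp hx
      rcases hm y hy with h | h | h <;> simp [h]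
    · rw [increment_map_neg, hinc]⟩
  invFun w := ⟨w.1.map fun x => -x, by
    obtain ⟨w, hm, hinc, hlen⟩ := w
    refine ⟨?_, ?_, by simp [hlen]⟩
    · intro x hx
      obtain ⟨y, hy, rfl⟩ := List.mem_map.mp hx
      rcases hm y hy with h | h | h <;> simp [h]
    · rw [increment_map_neg, hinc]; ring⟩
  left_inv w := by
    apply Subtype.ext
    simp [List.map_map, Function.comp]
  right_inv w := by
    apply Subtype.ext
    simp [List.map_map, Function.comp]

lemma M_neg (i : ℤ) : M i = M (-i) := by
  ext n
  simp only [M, coeff_mk]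
  exact congrArg (Nat.cast : ℕ → ℚ) (Nat.card_congr (negEquiv i n))

lemma M_zero : M 0 = 1 + B := by
  ext n
  simp only [M, B, coeff_mk, map_add, coeff_one]
  cases n with
  | zero =>
      have h1 : Nat.card {w : List ℤ // IsMotzkin w ∧ increment w = 0 ∧ w.length = 0} = 1 := by
        rw [Nat.card_eq_one_iff_unique]
        constructor
        · constructor
          rintro ⟨w, -, -, hw⟩ ⟨v, -, -, hv⟩
          apply Subtype.ext
          simp [List.length_eq_zero_iff.mp hw, List.length_eq_zero_iff.mp hv]
        · exact ⟨⟨[], fun x hx => by simp at hx, rfl, rfl⟩⟩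
      have h2 : Nat.card {w : List ℤ // IsMotzkin w ∧ increment w = 0 ∧ w.length = 0 ∧ w ≠ []}
          = 0 := by
        rw [Nat.card_eq_zero]
        left
        constructor
        rintro ⟨w, -, -, hw, hne⟩
        exact hne (List.length_eq_zero_iff.mp hw)
      rw [h1, h2]
      norm_num
  | succ n =>
      have he : {w : List ℤ // IsMotzkin w ∧ increment w = 0 ∧ w.length = n + 1}
          ≃ {w : List ℤ // IsMotzkin w ∧ increment w = 0 ∧ w.length = n + 1 ∧ w ≠ []} :=
        Equiv.subtypeEquivRight fun w => by
          constructor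
          · rintro ⟨hm, hi, hl⟩
            exact ⟨hm, hi, hl, by rintro rfl; simp at hl⟩
          · rintro ⟨hm, hi, hl, -⟩; exact ⟨hm, hi, hl⟩
      rw [Nat.card_congr he]
      simp

lemma increment_take_succ (w : List ℤ) (m : ℕ) (h : m < w.length) :
    increment (w.take (m + 1)) = increment (w.take m) + w[m] :=
  List.sum_take_succ w m h

lemma sum_take_drop (w : List ℤ) (k : ℕ) :
    increment (w.take k) + increment (w.drop k) = increment w :=
  List.sum_take_add_sum_drop w k

/-- Every Motzkin walk with negative increment has a primitive prefix. -/
lemma exists_primitive_prefix (w : List ℤ) (hm : IsMotzkin w) (hneg : increment w < 0) :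
    ∃ k, k ≤ w.length ∧ IsPrimitive (w.take k) := by
  have H : ∃ k, increment (w.take k) < 0 := ⟨w.length, by simpa [List.take_length] using hneg⟩
  have hfind := Nat.find_spec H
  have hmin : ∀ l < Nat.find H, 0 ≤ increment (w.take l) :=
    fun l hl => le_of_not_gt (Nat.find_min H hl)
  have hkpos : Nat.find H ≠ 0 := by
    intro h
    rw [h] at hfind
    simp [increment] at hfind
  obtain ⟨m, hmsucc⟩ := Nat.exists_eq_succ_of_ne_zero hkpos
  have hkle : m + 1 ≤ w.length := by
    by_contra h
    push_neg at h
    have h2 := hmin w.length (by omega)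
    rw [List.take_length] at h2
    omega
  have hm' : m < w.length := by omega
  have hstep := increment_take_succ w m hm'
  have hwm : w[m] = -1 ∨ w[m] = 0 ∨ w[m] = 1 := hm _ (List.getElem_mem hm')
  have h0 : 0 ≤ increment (w.take m) := hmin m (by omega)
  have hlt : increment (w.take (m + 1)) < 0 := by rw [hmsucc] at hfind; exact hfind
  have hinc : increment (w.take (m + 1)) = -1 := by
    rcases hwm with h | h | h <;> omega
  refine ⟨m + 1, hkle, hinc, ?_⟩
  intro l hl
  rw [List.length_take] at hl
  have hlm : l < m + 1 := lt_of_lt_of_le hl (min_le_left _ _)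
  rw [List.take_take, min_eq_left hlm.le]
  exact hmin l (by omega)

lemma primitive_prefix_not_lt (u₁ v₁ u₂ v₂ : List ℤ) (h1 : IsPrimitive u₁) (h2 : IsPrimitive u₂)
    (he : u₁ ++ v₁ = u₂ ++ v₂) : ¬ u₁.length < u₂.length := by
  intro hlt
  have ht1 : (u₁ ++ v₁).take u₁.length = u₁ := by
    rw [List.take_append_of_le_length le_rfl, List.take_length]
  have ht2 : (u₂ ++ v₂).take u₁.length = u₂.take u₁.length :=
    List.take_append_of_le_length hlt.le
  have heq : u₁ = u₂.take u₁.length := by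
    calc u₁ = (u₁ ++ v₁).take u₁.length := ht1.symm
    _ = (u₂ ++ v₂).take u₁.length := by rw [he]
    _ = u₂.take u₁.length := ht2
  have h0 := h2.2 u₁.length hlt
  have hI := congrArg increment heq
  have h1' := h1.1
  linarith

lemma primitive_prefix_unique (u₁ v₁ u₂ v₂ : List ℤ) (h1 : IsPrimitive u₁) (h2 : IsPrimitive u₂)
    (he : u₁ ++ v₁ = u₂ ++ v₂) : u₁ = u₂ ∧ v₁ = v₂ := by
  have hl : u₁.length = u₂.length := by
    rcases lt_trichotomy u₁.length u₂.length with h | h | h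
    · exact absurd h (primitive_prefix_not_lt u₁ v₁ u₂ v₂ h1 h2 he)
    · exact h
    · exact absurd h (primitive_prefix_not_lt u₂ v₂ u₁ v₁ h2 h1 he.symm)
  constructor
  · have := congrArg (List.take u₁.length) he
    rwa [List.take_append_of_le_length le_rfl, List.take_length, hl,
      List.take_append_of_le_length le_rfl, List.take_length] at this
  · have := congrArg (List.drop u₁.length) he
    rwa [List.drop_append_of_le_length le_rfl, List.drop_length, List.nil_append, hl,
      List.drop_append_of_le_length le_rfl, List.drop_length, List.nil_append] at this

/-- Walks of increment `-(j+1)` decompose as a primitive walk followed by a walk of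
increment `-j`. -/
noncomputable def splitEquiv (j : ℕ) (n : ℕ) :
    Wt (-(j : ℤ) - 1) n ≃ Σ k : Fin (n + 1), Pt k × Wt (-(j : ℤ)) (n - k) := by
  apply Equiv.symm
  apply Equiv.ofBijective (f := fun p : Σ k : Fin (n + 1), Pt k × Wt (-(j : ℤ)) (n - k) =>
    (⟨p.2.1.1 ++ p.2.2.1, by
      obtain ⟨k, ⟨u, hum, hup, hul, -⟩, ⟨v, hvm, hvi, hvl⟩⟩ := p
      refine ⟨?_, ?_, ?_⟩
      · intro x hx
        rcases List.mem_append.mp hx with h | h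
        · exact hum x h
        · exact hvm x h
      · show increment (u ++ v) = -(j : ℤ) - 1
        have hsum : increment (u ++ v) = increment u + increment v := List.sum_append
        rw [hsum, hup.1, hvi]
        ring
      · show (u ++ v).length = n
        rw [List.length_append]
        have hkn := k.isLt
        rw [hul, hvl]
        omega⟩ : Wt (-(j : ℤ) - 1) n))
  constructor
  · intro p q hpq
    obtain ⟨k₁, ⟨u₁, hu₁m, hu₁p, hu₁l, hu₁ne⟩, ⟨v₁, hv₁⟩⟩ := p
    obtain ⟨k₂, ⟨u₂, hu₂m, hu₂p, hu₂l, hu₂ne⟩, ⟨v₂, hv₂⟩⟩ := q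
    have he : u₁ ++ v₁ = u₂ ++ v₂ := congrArg Subtype.val hpq
    obtain ⟨hu, hv⟩ := primitive_prefix_unique u₁ v₁ u₂ v₂ hu₁p hu₂p he
    have hk : k₁ = k₂ := by
      apply Fin.ext
      rw [← hu₁l, ← hu₂l, hu]
    subst hk
    subst hu
    subst hv
    rfl
  · rintro ⟨w, hm, hinc, hlen⟩
    have hneg : increment w < 0 := by rw [hinc]; omega
    obtain ⟨k, hk, hprim⟩ := exists_primitive_prefix w hm hneg
    have hul : (w.take k).length = k := by rw [List.length_take]; omega
    have hkn : k ≤ n := by omega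
    have hune : w.take k ≠ [] := by
      intro h
      have := hprim.1
      rw [h] at this
      simp [increment] at this
    have hvinc : increment (w.drop k) = -(j : ℤ) := by
      have := sum_take_drop w k
      rw [hprim.1, hinc] at this
      omega
    refine ⟨⟨⟨k, by omega⟩,
      ⟨w.take k, fun x hx => hm x (List.take_subset k w hx), hprim, hul, hune⟩,
      ⟨w.drop k, fun x hx => hm x (List.drop_subset k w hx), hvinc, by
        show (w.drop k).length = n - k
        rw [List.length_drop, hlen]⟩⟩, ?_⟩
    exact Subtype.ext (List.take_append_drop k w)

lemma M_step (j : ℕ) : M (-(j : ℤ) - 1) = U * M (-(j : ℤ)) := by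
  ext n
  rw [coeff_mul, Finset.Nat.sum_antidiagonal_eq_sum_range_succ_mk]
  simp only [M, U, coeff_mk]
  rw [← Fin.sum_univ_eq_sum_range]
  rw [Nat.card_congr (splitEquiv j n)]
  have : Nat.card (Σ k : Fin (n + 1), Pt k × Wt (-(j : ℤ)) (n - k))
      = ∑ k : Fin (n + 1), Nat.card (Pt k) * Nat.card (Wt (-(j : ℤ)) (n - k)) := by
    letI : ∀ k : Fin (n + 1), Fintype (Pt (k : ℕ)) := fun k => Fintype.ofFinite _
    letI : ∀ k : Fin (n + 1), Fintype (Wt (-(j : ℤ)) (n - k)) := fun k => Fintype.ofFinite _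
    simp [Nat.card_eq_fintype_card]
  rw [this]
  push_cast
  rfl

lemma M_tower (i : ℕ) : M (-(i : ℤ)) = (1 + B) * U ^ i := by
  induction i with
  | zero => simpa using M_zero
  | succ i ih =>
      have h : (-(↑(i + 1) : ℤ)) = -(i : ℤ) - 1 := by push_cast; ring
      rw [h, M_step, ih]
      ring

/-- For every integer `i ≥ 1`, the generating series `M_i(t)` of
Motzkin walks of increment `i`, counted by length, equals `(1 + B(t)) · U(t)^i`. -/
theorem stmt_10 (i : ℕ) (hi : 1 ≤ i) :
    M (i : ℤ) = (1 + B) * U ^ i := by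
  rw [M_neg, M_tower]
end

section
/- If U is a formal power series with U(0)=0 satisfying U = t(1 + U + U^2), then t = U/(1 + U + U^2); more generally, a rational function in U is a rational function of t if and only if it is symmetric under the exchange U <-> 1/U. -/
open PowerSeries

set_option maxHeartbeats 1000000
set_option synthInstance.maxHeartbeats 400000

section Aux11

open Polynomial

noncomputable section

namespace Aux11

abbrev R := RatFunc ℚ

lemma reflect_reflect (N : ℕ) (p : ℚ[X]) : (p.reflect N).reflect N = p := by
  ext i; simp [Polynomial.coeff_reflect, Polynomial.revAt_invol]

lemma natDegree_reflect_le {N : ℕ} {p : ℚ[X]} (h : p.natDegree ≤ N) :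
    (p.reflect N).natDegree ≤ N := by
  apply Polynomial.natDegree_le_iff_coeff_eq_zero.2
  intro i hi
  rw [Polynomial.coeff_reflect]
  show p.coeff (if i ≤ N then N - i else i) = 0
  rw [if_neg (by omega)]
  exact Polynomial.coeff_eq_zero_of_natDegree_lt (lt_of_le_of_lt h hi)

lemma aeval_X_eq (p : ℚ[X]) :
    Polynomial.aeval (RatFunc.X : R) p = algebraMap ℚ[X] R p := by
  have := Polynomial.aeval_algHom_apply (IsScalarTower.toAlgHom ℚ ℚ[X] R) Polynomial.X p
  simp only [Polynomial.aeval_X_left_apply] at this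
  simpa [RatFunc.algebraMap_X] using this

lemma aeval_invX_ne_zero {p : ℚ[X]} (hp : p ≠ 0) :
    Polynomial.aeval (RatFunc.X⁻¹ : R) p ≠ 0 := by
  haveI : Invertible (RatFunc.X : R) := invertibleOfNonzero RatFunc.X_ne_zero
  set N := p.natDegree
  set q := p.reflect N with hq
  have hq0 : q ≠ 0 := by simpa [hq, Polynomial.reflect_eq_zero_iff] using hp
  have hqN : q.natDegree ≤ N := natDegree_reflect_le le_rfl
  have key := Polynomial.eval₂_reflect_eq_zero_iff (algebraMap ℚ R) (RatFunc.X : R) N q hqN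
  rw [reflect_reflect] at key
  rw [invOf_eq_inv] at key
  intro h
  have h2 : Polynomial.eval₂ (algebraMap ℚ R) (RatFunc.X : R) q = 0 := by
    rw [← key]; simpa [Polynomial.aeval_def] using h
  have h3 : Polynomial.aeval (RatFunc.X : R) q = 0 := by simpa [Polynomial.aeval_def] using h2
  rw [aeval_X_eq] at h3
  exact hq0 (RatFunc.algebraMap_injective ℚ (by simpa using h3))

lemma aeval_inj : Function.Injective
    ⇑((Polynomial.aeval (RatFunc.X⁻¹ : R)).toRingHom : ℚ[X] →+* R) := by
  rw [injective_iff_map_eq_zero]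
  intro p hp
  by_contra h
  exact aeval_invX_ne_zero h hp

def σ : R →+* R := IsFractionRing.lift (A := ℚ[X]) aeval_inj

lemma σ_algebraMap (p : ℚ[X]) :
    σ (algebraMap ℚ[X] R p) = Polynomial.aeval (RatFunc.X⁻¹ : R) p :=
  IsFractionRing.lift_algebraMap aeval_inj p

lemma σ_X : σ (RatFunc.X : R) = (RatFunc.X : R)⁻¹ := by
  rw [← RatFunc.algebraMap_X, σ_algebraMap, Polynomial.aeval_X, RatFunc.algebraMap_X]

lemma aeval_mul_pow (p : ℚ[X]) {N : ℕ} (h : p.natDegree ≤ N) :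
    Polynomial.aeval (RatFunc.X⁻¹ : R) p * RatFunc.X ^ N
      = algebraMap ℚ[X] R (p.reflect N) := by
  haveI : Invertible (RatFunc.X : R) := invertibleOfNonzero RatFunc.X_ne_zero
  have key := Polynomial.eval₂_reflect_mul_pow (algebraMap ℚ R) (RatFunc.X : R) N
    (p.reflect N) (natDegree_reflect_le h)
  rw [reflect_reflect, invOf_eq_inv] at key
  rw [Polynomial.aeval_def, key, ← Polynomial.aeval_def, aeval_X_eq]

lemma reflect_eval {x : ℚ} (hx : x ≠ 0) (p : ℚ[X]) {N : ℕ} (h : p.natDegree ≤ N) :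
    (p.reflect N).eval x = p.eval x⁻¹ * x ^ N := by
  haveI : Invertible x := invertibleOfNonzero hx
  have key := Polynomial.eval₂_reflect_mul_pow (RingHom.id ℚ) x N
    (p.reflect N) (natDegree_reflect_le h)
  rw [reflect_reflect, invOf_eq_inv] at key
  rw [show (p.reflect N).eval x = Polynomial.eval₂ (RingHom.id ℚ) x (p.reflect N) from rfl,
    ← key]
  rfl

lemma eval_div_poly (a b : ℚ[X]) {x : ℚ} (hb : b.eval x ≠ 0) :
    RatFunc.eval (RingHom.id ℚ) x (algebraMap ℚ[X] R a / algebraMap ℚ[X] R b)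
      = a.eval x / b.eval x := by
  have hb0 : b ≠ 0 := fun h => hb (by simp [h])
  set G : R := algebraMap ℚ[X] R a / algebraMap ℚ[X] R b with hG
  have hdvd : G.denom ∣ b := (RatFunc.denom_dvd hb0).2 ⟨a, rfl⟩
  have hdenom : G.denom.eval x ≠ 0 := by
    obtain ⟨c, hc⟩ := hdvd
    intro h
    apply hb
    rw [hc, Polynomial.eval_mul, h, zero_mul]
  have hbne : (algebraMap ℚ[X] R b) ≠ 0 := by
    simpa [IsFractionRing.to_map_eq_zero_iff] using hb0
  have hdne : (algebraMap ℚ[X] R G.denom) ≠ 0 := by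
    simpa [IsFractionRing.to_map_eq_zero_iff] using G.denom_ne_zero
  have h1 : algebraMap ℚ[X] R G.num / algebraMap ℚ[X] R G.denom
      = algebraMap ℚ[X] R a / algebraMap ℚ[X] R b := by
    rw [RatFunc.num_div_denom]
  have hcross : G.num * b = a * G.denom := by
    apply RatFunc.algebraMap_injective ℚ
    rw [map_mul, map_mul]
    rw [div_eq_div_iff hdne hbne] at h1
    exact h1
  have heval : RatFunc.eval (RingHom.id ℚ) x G = G.num.eval x / G.denom.eval x := by
    simp [RatFunc.eval]
  rw [heval, div_eq_div_iff hdenom hb]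
  have := congrArg (Polynomial.eval x) hcross
  simpa [Polynomial.eval_mul, mul_comm] using this

lemma eval_sigma (F : R) {x : ℚ} (hx : x ≠ 0) (hD : F.denom.eval x⁻¹ ≠ 0) :
    RatFunc.eval (RingHom.id ℚ) x (σ F) = RatFunc.eval (RingHom.id ℚ) x⁻¹ F := by
  set N := max F.num.natDegree F.denom.natDegree with hN
  have hnum : F.num.natDegree ≤ N := le_max_left _ _
  have hden : F.denom.natDegree ≤ N := le_max_right _ _
  have hXN : (RatFunc.X : R) ^ N ≠ 0 := pow_ne_zero _ RatFunc.X_ne_zero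
  have hσF : σ F = algebraMap ℚ[X] R (F.num.reflect N) / algebraMap ℚ[X] R (F.denom.reflect N) := by
    conv_lhs => rw [← RatFunc.num_div_denom F]
    rw [map_div₀, σ_algebraMap, σ_algebraMap,
      ← aeval_mul_pow F.num hnum, ← aeval_mul_pow F.denom hden]
    rw [mul_div_mul_right _ _ hXN]
  have hbev : (F.denom.reflect N).eval x ≠ 0 := by
    rw [reflect_eval hx F.denom hden]
    exact mul_ne_zero hD (pow_ne_zero _ hx)
  rw [hσF, eval_div_poly _ _ hbev, reflect_eval hx F.num hnum, reflect_eval hx F.denom hden,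
    mul_div_mul_right _ _ (pow_ne_zero _ hx)]
  simp [RatFunc.eval]

/-- the generating rational function `t = X / (1 + X + X²)` -/
def t : R := RatFunc.X / (1 + RatFunc.X + RatFunc.X ^ 2)

lemma hden_ne : (1 + RatFunc.X + RatFunc.X ^ 2 : R) ≠ 0 := by
  have hp : (1 + Polynomial.X + Polynomial.X ^ 2 : ℚ[X]) ≠ 0 := by
    intro h
    have := congrArg (Polynomial.eval 0) h
    simp at this
  have : algebraMap ℚ[X] R (1 + Polynomial.X + Polynomial.X ^ 2)
      = 1 + RatFunc.X + RatFunc.X ^ 2 := by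
    simp [map_add, map_one, map_pow, RatFunc.algebraMap_X]
  rw [← this]
  exact fun h => hp ((IsFractionRing.to_map_eq_zero_iff.1 h))

lemma σ_t : σ t = t := by
  have hX := RatFunc.X_ne_zero (K := ℚ)
  have hX2 : (RatFunc.X : R) ^ 2 ≠ 0 := pow_ne_zero _ hX
  rw [t, map_div₀, σ_X, map_add, map_add, map_one, map_pow, σ_X]
  rw [show ((RatFunc.X : R)⁻¹ / (1 + RatFunc.X⁻¹ + (RatFunc.X⁻¹) ^ 2))
      = ((RatFunc.X : R)⁻¹ * RatFunc.X ^ 2) / ((1 + RatFunc.X⁻¹ + (RatFunc.X⁻¹) ^ 2)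
        * RatFunc.X ^ 2) from (mul_div_mul_right _ _ hX2).symm]
  congr 1
  · field_simp
  · field_simp
    ring

/-- the subfield generated by `t` -/
def Kt : Subfield R := Subfield.closure {t}

lemma t_mem : t ∈ Kt := Subfield.subset_closure rfl

lemma σ_fix {y : R} (hy : y ∈ Kt) : σ y = y := by
  have heq : Set.EqOn ⇑σ ⇑(RingHom.id R) {t} := by
    intro z hz
    rcases hz with rfl
    simpa using σ_t
  exact RingHom.eqOn_field_closure heq hy

lemma s_mem : RatFunc.X + (RatFunc.X : R)⁻¹ ∈ Kt := by
  have hX := RatFunc.X_ne_zero (K := ℚ)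
  have h1 : t⁻¹ ∈ Kt := Kt.inv_mem t_mem
  have h2 : t⁻¹ - 1 ∈ Kt := Kt.sub_mem h1 Kt.one_mem
  have h3 : t⁻¹ - 1 = RatFunc.X + (RatFunc.X : R)⁻¹ := by
    rw [t, inv_div]
    field_simp
    ring
  rwa [h3] at h2

lemma X_ne_invX : (RatFunc.X : R) - (RatFunc.X : R)⁻¹ ≠ 0 := by
  have hX := RatFunc.X_ne_zero (K := ℚ)
  intro h
  have hXX : (RatFunc.X : R) = (RatFunc.X : R)⁻¹ := sub_eq_zero.1 h
  have h2 : (RatFunc.X : R) ^ 2 - 1 = 0 := by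
    rw [sq]
    nth_rewrite 2 [hXX]
    rw [mul_inv_cancel₀ hX, sub_self]
  have hp : (Polynomial.X ^ 2 - 1 : ℚ[X]) ≠ 0 := by
    intro hc
    have := congrArg (Polynomial.eval 0) hc
    simp at this
  apply hp
  apply RatFunc.algebraMap_injective ℚ
  simpa [map_sub, map_pow, map_one, RatFunc.algebraMap_X] using h2

/-- Every element fixed by `σ` lies in the subfield generated by `t`. -/
lemma mem_Kt_of_fixed {F : R} (hF : σ F = F) : F ∈ Kt := by
  have hX := RatFunc.X_ne_zero (K := ℚ)
  -- the element s = X + X⁻¹ of Kt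
  set sK : Kt := ⟨RatFunc.X + (RatFunc.X : R)⁻¹, s_mem⟩ with hsK
  -- the quadratic polynomial over Kt killed by X
  set q : Polynomial Kt := Polynomial.X ^ 2 - Polynomial.C sK * Polynomial.X + 1 with hq
  have hq_monic : q.Monic := by
    have : q = Polynomial.X ^ 2 + (-(Polynomial.C sK) * Polynomial.X + 1) := by ring
    rw [this]
    apply Polynomial.monic_X_pow_add
    refine lt_of_le_of_lt (Polynomial.degree_add_le _ _) ?_
    rw [max_lt_iff]
    constructor
    · refine lt_of_le_of_lt (Polynomial.degree_mul_le _ _) ?_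
      refine lt_of_le_of_lt (add_le_add
        (le_trans (le_of_eq (Polynomial.degree_neg _)) Polynomial.degree_C_le)
        Polynomial.degree_X_le) ?_
      decide
    · exact lt_of_le_of_lt Polynomial.degree_one_le (by decide)
  have halg : algebraMap Kt R sK = RatFunc.X + (RatFunc.X : R)⁻¹ := rfl
  have hq_root : Polynomial.aeval (RatFunc.X : R) q = 0 := by
    rw [hq]
    simp only [map_add, map_sub, map_pow, map_mul, map_one,
      Polynomial.aeval_X, Polynomial.aeval_C, halg]
    field_simp
    ring
  have hint : IsIntegral Kt (RatFunc.X : R) := ⟨q, hq_monic, by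
    rwa [← Polynomial.aeval_def]⟩
  -- all of R is generated by X over Kt
  have hadj : ∀ G : R, G ∈ IntermediateField.adjoin Kt {(RatFunc.X : R)} := by
    intro G
    set L := IntermediateField.adjoin Kt {(RatFunc.X : R)} with hL
    have hXL : (RatFunc.X : R) ∈ L := IntermediateField.subset_adjoin _ _ rfl
    have hpoly : ∀ p : ℚ[X], algebraMap ℚ[X] R p ∈ L := by
      intro p
      induction p using Polynomial.induction_on with
      | C a =>
        have h1 : algebraMap ℚ[X] R (Polynomial.C a) = ((a : ℚ) : R) := by
          rw [← Polynomial.algebraMap_eq, ← IsScalarTower.algebraMap_apply ℚ ℚ[X] R]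
          exact eq_ratCast (algebraMap ℚ R) a
        have h2 : ((a : ℚ) : R) ∈ Kt := SubfieldClass.ratCast_mem Kt a
        have h3 := L.algebraMap_mem ⟨((a : ℚ) : R), h2⟩
        rw [h1]
        exact h3
      | add p1 p2 hp1 hp2 =>
        rw [map_add]; exact L.add_mem hp1 hp2
      | monomial n a hp =>
        have : algebraMap ℚ[X] R (Polynomial.C a * Polynomial.X ^ (n + 1))
            = algebraMap ℚ[X] R (Polynomial.C a * Polynomial.X ^ n) * RatFunc.X := by
          rw [← RatFunc.algebraMap_X, ← map_mul]
          congr 1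
          ring
        rw [this]
        exact L.mul_mem hp hXL
    rw [← RatFunc.num_div_denom G]
    exact L.div_mem (hpoly _) (hpoly _)
  have h2 : F ∈ Algebra.adjoin Kt {(RatFunc.X : R)} := by
    rw [← IntermediateField.adjoin_simple_toSubalgebra_of_isAlgebraic hint.isAlgebraic]
    rw [IntermediateField.mem_toSubalgebra]
    exact hadj F
  rw [Algebra.adjoin_singleton_eq_range_aeval, AlgHom.mem_range] at h2
  obtain ⟨p, hp⟩ := h2
  -- reduce p mod q
  set r : Polynomial Kt := p %ₘ q with hr
  have hFr : F = Polynomial.aeval (RatFunc.X : R) r := by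
    have hmd := Polynomial.modByMonic_add_div p q
    have := congrArg (Polynomial.aeval (RatFunc.X : R)) hmd
    rw [map_add, map_mul, hq_root, zero_mul, add_zero] at this
    rw [← hp, ← this]
  have hdeg : r.natDegree ≤ 1 := by
    by_cases hr0 : r = 0
    · simp [hr0]
    · have hlt : r.degree < q.degree := Polynomial.degree_modByMonic_lt p hq_monic
      have hqdeg : q.degree ≤ 2 := by
        rw [hq]
        refine le_trans (Polynomial.degree_add_le _ _) ?_
        rw [max_le_iff]
        constructor
        · refine le_trans (Polynomial.degree_sub_le _ _) ?_
          rw [max_le_iff]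
          refine ⟨by simpa using Polynomial.degree_X_pow_le (R := Kt) 2, ?_⟩
          refine le_trans (Polynomial.degree_mul_le _ _) ?_
          refine le_trans (add_le_add (Polynomial.degree_C_le) Polynomial.degree_X_le) ?_
          decide
        · exact le_trans Polynomial.degree_one_le (by decide)
      have : r.natDegree < 2 := (Polynomial.natDegree_lt_iff_degree_lt hr0).2
        (lt_of_lt_of_le hlt hqdeg)
      omega
  have hrepr : F = algebraMap Kt R (r.coeff 1) * RatFunc.X + algebraMap Kt R (r.coeff 0) := by
    rw [hFr]
    conv_lhs => rw [Polynomial.eq_X_add_C_of_natDegree_le_one hdeg]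
    simp [map_add, map_mul, Polynomial.aeval_X, Polynomial.aeval_C]
  -- apply σ
  have hfix_coeff : ∀ c : Kt, σ (algebraMap Kt R c) = algebraMap Kt R c := by
    intro c
    exact σ_fix c.2
  have hσF : σ F = algebraMap Kt R (r.coeff 1) * (RatFunc.X : R)⁻¹
      + algebraMap Kt R (r.coeff 0) := by
    rw [hrepr, map_add, map_mul, σ_X, hfix_coeff, hfix_coeff]
  have hb : algebraMap Kt R (r.coeff 1) = 0 := by
    have := hF
    rw [hσF, hrepr] at this
    have h4 : algebraMap Kt R (r.coeff 1) * ((RatFunc.X : R) - (RatFunc.X : R)⁻¹) = 0 := by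
      linear_combination -this
    rcases mul_eq_zero.1 h4 with h | h
    · exact h
    · exact absurd h X_ne_invX
  rw [hrepr, hb, zero_mul, zero_add]
  exact (r.coeff 0).2

end Aux11

end

end Aux11

/-- If `U` is a formal power series with `U(0) = 0` satisfying
`U = t(1 + U + U²)`, then `t = U/(1 + U + U²)`. More generally, a rational
function `F` in the indeterminate `U` is a rational function of `t = U/(1+U+U²)`
(i.e. lies in the subfield generated by `t`) if and only if it is symmetric under
the exchange `U ↔ 1/U` (expressed by evaluation at all nonzero rationals at which
the denominator of `F` does not vanish). -/
theorem stmt_11 :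
    (∀ U : PowerSeries ℚ, constantCoeff U = 0 → U = X * (1 + U + U ^ 2) →
      X = U * (1 + U + U ^ 2)⁻¹) ∧
    (∀ F : RatFunc ℚ,
      F ∈ Subfield.closure ({RatFunc.X / (1 + RatFunc.X + RatFunc.X ^ 2)} :
          Set (RatFunc ℚ)) ↔
        ∀ x : ℚ, x ≠ 0 → F.denom.eval x ≠ 0 → F.denom.eval x⁻¹ ≠ 0 →
          RatFunc.eval (RingHom.id ℚ) x F = RatFunc.eval (RingHom.id ℚ) x⁻¹ F) := by
  constructor
  · intro U h0 hU
    have hs : constantCoeff (1 + U + U ^ 2) ≠ 0 := by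
      simp [map_add, map_one, map_pow, h0]
    calc X = X * ((1 + U + U ^ 2) * (1 + U + U ^ 2)⁻¹) := by
          rw [PowerSeries.mul_inv_cancel _ hs, mul_one]
      _ = U * (1 + U + U ^ 2)⁻¹ := by rw [← mul_assoc, ← hU]
  · intro F
    constructor
    · -- forward: closure membership implies symmetry of evaluations
      intro hF x hx hd1 hd2
      have hfix : Aux11.σ F = F := Aux11.σ_fix hF
      have := Aux11.eval_sigma F hx hd2
      rw [hfix] at this
      exact this
    · -- reverse: symmetry implies closure membership
      intro hsym
      have hfix : Aux11.σ F = F := by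
        set G : RatFunc ℚ := Aux11.σ F with hG
        set P : Polynomial ℚ := F.num * G.denom - G.num * F.denom with hP
        have hP0 : P = 0 := by
          by_contra hP0
          -- choose a good point
          set bad : Finset ℚ :=
            (F.denom.roots.toFinset ∪ G.denom.roots.toFinset ∪ P.roots.toFinset)
              ∪ F.denom.roots.toFinset.image (·⁻¹) ∪ {0} with hbad
          obtain ⟨x, hxbad⟩ := Infinite.exists_notMem_finset bad
          simp only [hbad, Finset.mem_union, Finset.mem_singleton, Finset.mem_image,
            Multiset.mem_toFinset, not_or, not_exists] at hxbad
          obtain ⟨⟨⟨⟨hxF, hxG⟩, hxP⟩, hxFi⟩, hx0⟩ := hxbad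
          have hx : x ≠ 0 := hx0
          have hd1 : F.denom.eval x ≠ 0 := by
            intro h
            exact hxF (Polynomial.mem_roots'.2 ⟨F.denom_ne_zero, h⟩)
          have hd2 : F.denom.eval x⁻¹ ≠ 0 := by
            intro h
            have hmem : x⁻¹ ∈ F.denom.roots := Polynomial.mem_roots'.2 ⟨F.denom_ne_zero, h⟩
            exact hxFi x⁻¹ ⟨hmem, by simp⟩
          have hd3 : G.denom.eval x ≠ 0 := by
            intro h
            exact hxG (Polynomial.mem_roots'.2 ⟨G.denom_ne_zero, h⟩)
          have h1 : RatFunc.eval (RingHom.id ℚ) x G = RatFunc.eval (RingHom.id ℚ) x⁻¹ F :=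
            Aux11.eval_sigma F hx hd2
          have h2 := hsym x hx hd1 hd2
          have h3 : RatFunc.eval (RingHom.id ℚ) x F = RatFunc.eval (RingHom.id ℚ) x G := by
            rw [h2, ← h1]
          have hevF : RatFunc.eval (RingHom.id ℚ) x F = F.num.eval x / F.denom.eval x := by
            simp [RatFunc.eval]
          have hevG : RatFunc.eval (RingHom.id ℚ) x G = G.num.eval x / G.denom.eval x := by
            simp [RatFunc.eval]
          rw [hevF, hevG, div_eq_div_iff hd1 hd3] at h3
          apply hxP
          refine Polynomial.mem_roots'.2 ⟨hP0, ?_⟩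
          simp only [hP, Polynomial.IsRoot, Polynomial.eval_sub, Polynomial.eval_mul]
          linear_combination h3
        -- conclude G = F from the vanishing cross-product
        have hcross : F.num * G.denom = G.num * F.denom := by
          have := hP0
          rw [hP, sub_eq_zero] at this
          exact this
        have hFne : (algebraMap (Polynomial ℚ) (RatFunc ℚ) F.denom) ≠ 0 := by
          simpa [IsFractionRing.to_map_eq_zero_iff] using F.denom_ne_zero
        have hGne : (algebraMap (Polynomial ℚ) (RatFunc ℚ) G.denom) ≠ 0 := by
          simpa [IsFractionRing.to_map_eq_zero_iff] using G.denom_ne_zero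
        have : G = F := by
          rw [← RatFunc.num_div_denom G, ← RatFunc.num_div_denom F,
            div_eq_div_iff hGne hFne, ← map_mul, ← map_mul]
          exact congrArg _ hcross.symm
        exact this
      exact Aux11.mem_Kt_of_fixed hfix
end

section
/- The power series U defined by U = t(1 + U + U^2), U(0)=0, has the Puiseux expansion U = 1 - sqrt(3) * sqrt(1 - 3t) + O(1 - 3t) at its dominant singularity t = 1/3, and |U(t)| <= 1 for all complex t with |t| <= 1/3, with equality only at t = 1/3. -/
open PowerSeries Filter Asymptotics Finset

set_option linter.unusedSectionVars false

private lemma cauchy_partial (x : ℕ → ℝ) (hx : ∀ i, 0 ≤ x i) (N : ℕ) :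
    ∑ n ∈ range N, ∑ p ∈ antidiagonal n, x p.1 * x p.2 ≤ (∑ i ∈ range N, x i)^2 := by
  have hdisj : ((range N : Finset ℕ) : Set ℕ).PairwiseDisjoint
      (fun n => (antidiagonal n : Finset (ℕ × ℕ))) := by
    intro m _ n _ hmn
    simp only [Finset.disjoint_left]
    intro p hpm hpn
    rw [Finset.HasAntidiagonal.mem_antidiagonal] at hpm hpn
    exact hmn (hpm.symm.trans hpn)
  rw [← Finset.sum_biUnion hdisj]
  have hsub : (range N).biUnion (fun n => antidiagonal n) ⊆ range N ×ˢ range N := by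
    intro p hp
    simp only [Finset.mem_biUnion, Finset.mem_range] at hp
    obtain ⟨n, hn, hpn⟩ := hp
    rw [Finset.HasAntidiagonal.mem_antidiagonal] at hpn
    simp only [Finset.mem_product, Finset.mem_range]
    omega
  calc ∑ p ∈ (range N).biUnion (fun n => antidiagonal n), x p.1 * x p.2
      ≤ ∑ p ∈ range N ×ˢ range N, x p.1 * x p.2 := by
        apply Finset.sum_le_sum_of_subset_of_nonneg hsub
        intro p _ _; exact mul_nonneg (hx _) (hx _)
    _ = (∑ i ∈ range N, x i)^2 := by
        rw [sq, Finset.sum_mul_sum, ← Finset.sum_product']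

section

variable (a : ℕ → ℝ) (h0 : a 0 = 0)
  (hrec : ∀ n, a (n+1) = (if n = 0 then 1 else 0) + a n + ∑ p ∈ antidiagonal n, a p.1 * a p.2)

include h0 hrec

private lemma motzkin_nonneg : ∀ n, 0 ≤ a n := by
  intro n
  induction n using Nat.strong_induction_on with
  | _ n ih =>
    match n with
    | 0 => simp [h0]
    | (m+1) =>
      rw [hrec]
      have h1 : 0 ≤ ∑ p ∈ antidiagonal m, a p.1 * a p.2 := by
        apply Finset.sum_nonneg
        intro p hp
        rw [Finset.HasAntidiagonal.mem_antidiagonal] at hp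
        exact mul_nonneg (ih p.1 (by omega)) (ih p.2 (by omega))
      have h2 : 0 ≤ a m := ih m (by omega)
      positivity

private lemma motzkin_a1 : a 1 = 1 := by rw [hrec 0]; simp [h0]

private lemma motzkin_a2 : a 2 = 1 := by
  rw [hrec 1]
  simp [h0, motzkin_a1 a h0 hrec, Finset.Nat.antidiagonal_succ]

private lemma motzkin_partial : ∀ N, ∑ n ∈ range N, a n * (1/3:ℝ)^n ≤ 1 := by
  have hnn := motzkin_nonneg a h0 hrec
  intro N
  induction N with
  | zero => simp
  | succ N ih =>
    rw [Finset.sum_range_succ']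
    have key : ∀ n, a (n+1) * (1/3:ℝ)^(n+1) =
        (1/3) * ((if n = 0 then (1:ℝ) else 0) * (1/3)^n) + (1/3) * (a n * (1/3)^n)
        + (1/3) * ((∑ p ∈ antidiagonal n, a p.1 * a p.2) * (1/3)^n) := by
      intro n; rw [hrec]; ring
    rw [Finset.sum_congr rfl (fun n _ => key n)]
    rw [Finset.sum_add_distrib, Finset.sum_add_distrib, ← Finset.mul_sum, ← Finset.mul_sum,
      ← Finset.mul_sum]
    have hD : ∑ n ∈ range N, (if n = 0 then (1:ℝ) else 0) * (1/3)^n ≤ 1 := by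
      have : ∀ n, (if n = 0 then (1:ℝ) else 0) * (1/3:ℝ)^n = if n = 0 then (1:ℝ) else 0 := by
        intro n; split <;> simp_all
      rw [Finset.sum_congr rfl (fun n _ => this n),
        Finset.sum_ite_eq' (range N) 0 (fun _ => (1:ℝ))]
      split <;> norm_num
    have hC : ∑ n ∈ range N, (∑ p ∈ antidiagonal n, a p.1 * a p.2) * (1/3:ℝ)^n
        ≤ (∑ i ∈ range N, a i * (1/3:ℝ)^i)^2 := by
      have : ∀ n ∈ range N, (∑ p ∈ antidiagonal n, a p.1 * a p.2) * (1/3:ℝ)^n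
          = ∑ p ∈ antidiagonal n, (a p.1 * (1/3:ℝ)^p.1) * (a p.2 * (1/3:ℝ)^p.2) := by
        intro n _
        rw [Finset.sum_mul]
        apply Finset.sum_congr rfl
        intro p hp
        rw [Finset.HasAntidiagonal.mem_antidiagonal] at hp
        rw [← hp, pow_add]; ring
      rw [Finset.sum_congr rfl this]
      exact cauchy_partial (fun i => a i * (1/3)^i)
        (fun i => mul_nonneg (hnn i) (by positivity)) N
    have hSnn : 0 ≤ ∑ i ∈ range N, a i * (1/3:ℝ)^i :=
      Finset.sum_nonneg (fun i _ => mul_nonneg (hnn i) (by positivity))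
    rw [h0]
    nlinarith [ih, hSnn]

end

section

variable (a : ℕ → ℝ) (hnn : ∀ n, 0 ≤ a n)
  (hpart : ∀ N, ∑ n ∈ range N, a n * (1/3:ℝ)^n ≤ 1)

include hnn hpart

private lemma motzkin_summable13 : Summable (fun n => a n * (1/3:ℝ)^n) :=
  summable_of_sum_range_le (fun n => mul_nonneg (hnn n) (by positivity)) hpart

private lemma motzkin_tsum13 : ∑' n, a n * (1/3:ℝ)^n ≤ 1 :=
  Real.tsum_le_of_sum_range_le (fun n => mul_nonneg (hnn n) (by positivity)) hpart

private lemma motzkin_summable_norm (t : ℝ) (ht0 : 0 ≤ t) (ht : t ≤ 1/3) :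
    Summable (fun n => ‖a n * t^n‖) := by
  apply Summable.of_nonneg_of_le (fun n => norm_nonneg _)
    (fun n => ?_) (motzkin_summable13 a hnn hpart)
  rw [Real.norm_eq_abs, abs_of_nonneg (mul_nonneg (hnn n) (by positivity))]
  exact mul_le_mul_of_nonneg_left (pow_le_pow_left₀ ht0 ht n) (hnn n)

end

section

variable (a : ℕ → ℝ) (h0 : a 0 = 0)
  (hrec : ∀ n, a (n+1) = (if n = 0 then 1 else 0) + a n + ∑ p ∈ antidiagonal n, a p.1 * a p.2)
  (hnn : ∀ n, 0 ≤ a n)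
  (hpart : ∀ N, ∑ n ∈ range N, a n * (1/3:ℝ)^n ≤ 1)

include h0 hrec hnn hpart

private lemma motzkin_funeq (t : ℝ) (ht0 : 0 ≤ t) (ht : t ≤ 1/3) :
    (∑' n, a n * t^n) = t * (1 + (∑' n, a n * t^n) + (∑' n, a n * t^n)^2) := by
  have hNorm : Summable (fun n => ‖a n * t^n‖) := motzkin_summable_norm a hnn hpart t ht0 ht
  have hS : Summable (fun n => a n * t^n) := hNorm.of_norm
  have hCs : Summable (fun n => (∑ p ∈ antidiagonal n, (a p.1 * t^p.1) * (a p.2 * t^p.2))) :=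
    (summable_norm_sum_mul_antidiagonal_of_summable_norm hNorm hNorm).of_norm
  have hsq : (∑' n, a n * t^n)^2
      = ∑' n, (∑ p ∈ antidiagonal n, (a p.1 * t^p.1) * (a p.2 * t^p.2)) := by
    rw [sq]
    exact tsum_mul_tsum_eq_tsum_sum_antidiagonal_of_summable_norm hNorm hNorm
  have hdelta : (1:ℝ) = ∑' n : ℕ, (if n = 0 then (1:ℝ) else 0) * t^n := by
    have : ∀ n : ℕ, (if n = 0 then (1:ℝ) else 0) * t^n = if n = 0 then (1:ℝ) else 0 := by
      intro n; split <;> simp_all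
    rw [tsum_congr this]; exact (tsum_ite_eq (0:ℕ) (fun _ => (1:ℝ))).symm
  have hDsum : Summable (fun n : ℕ => (if n = 0 then (1:ℝ) else 0) * t^n) := by
    apply summable_of_ne_finset_zero (s := {0})
    intro n hn
    simp only [Finset.mem_singleton] at hn
    simp [hn]
  calc (∑' n, a n * t^n)
      = a 0 + ∑' n, a (n+1) * t^(n+1) := by rw [Summable.tsum_eq_zero_add hS]; norm_num
    _ = ∑' n, ((if n = 0 then (1:ℝ) else 0) + a n
          + ∑ p ∈ antidiagonal n, a p.1 * a p.2) * t^(n+1) := by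
        rw [h0, zero_add]
        exact tsum_congr (fun n => by rw [hrec])
    _ = ∑' n, t * (((if n = 0 then (1:ℝ) else 0) * t^n)
          + (a n * t^n)
          + (∑ p ∈ antidiagonal n, (a p.1 * t^p.1) * (a p.2 * t^p.2))) := by
        apply tsum_congr
        intro n
        have : (∑ p ∈ antidiagonal n, (a p.1 * t^p.1) * (a p.2 * t^p.2))
            = (∑ p ∈ antidiagonal n, a p.1 * a p.2) * t^n := by
          rw [Finset.sum_mul]
          apply Finset.sum_congr rfl
          intro p hp
          rw [Finset.HasAntidiagonal.mem_antidiagonal] at hp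
          rw [← hp, pow_add]; ring
        rw [this, pow_succ]; ring
    _ = t * ∑' n, (((if n = 0 then (1:ℝ) else 0) * t^n)
          + (a n * t^n)
          + (∑ p ∈ antidiagonal n, (a p.1 * t^p.1) * (a p.2 * t^p.2))) := tsum_mul_left
    _ = t * (1 + (∑' n, a n * t^n) + (∑' n, a n * t^n)^2) := by
        rw [Summable.tsum_add (hDsum.add hS) hCs, Summable.tsum_add hDsum hS, hsq, ← hdelta]

private lemma motzkin_closed (t : ℝ) (ht0 : 0 < t) (ht : t < 1/3) :
    (∑' n, a n * t^n) = (1 - t - Real.sqrt ((1-3*t)*(1+t)))/(2*t) := by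
  set v := ∑' n, a n * t^n with hv
  have hfe := motzkin_funeq a h0 hrec hnn hpart t ht0.le ht.le
  rw [← hv] at hfe
  have hv0 : 0 ≤ v := tsum_nonneg (fun n => mul_nonneg (hnn n) (by positivity))
  have hv1 : v ≤ 1 := by
    have h1 : v ≤ ∑' n, a n * (1/3:ℝ)^n := by
      apply Summable.tsum_le_tsum _ ((motzkin_summable_norm a hnn hpart t ht0.le ht.le).of_norm)
        (motzkin_summable13 a hnn hpart)
      intro n
      exact mul_le_mul_of_nonneg_left (pow_le_pow_left₀ ht0.le ht.le n) (hnn n)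
    exact h1.trans (motzkin_tsum13 a hnn hpart)
  set r := Real.sqrt ((1-3*t)*(1+t)) with hrdef
  have hrnn : 0 ≤ r := Real.sqrt_nonneg _
  have hr2 : r^2 = (1-3*t)*(1+t) := Real.sq_sqrt (by nlinarith)
  set x := 2*t*v - (1-t) with hx
  have hxneg : x < 0 := by simp only [hx]; nlinarith
  have hx2 : x^2 = r^2 := by rw [hr2]; simp only [hx]; nlinarith [hfe]
  have hfac : (x + r) * (x - r) = 0 := by nlinarith [hx2]
  have hxr : x = -r := by
    rcases mul_eq_zero.mp hfac with h | h
    · linarith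
    · linarith
  have ht' : (2*t) ≠ 0 := by positivity
  field_simp
  simp only [hx] at hxr
  linarith

end

private lemma motzkin_est_core (t A B C : ℝ) (ht0 : 3/10 < t) (ht : t < 1/3)
    (hA0 : 0 ≤ A) (hB0 : 0 ≤ B) (hC0 : 0 ≤ C)
    (hA2 : A^2 = 1 - 3*t) (hB2 : B^2 = 1 + t) (hC2 : C^2 = 3) :
    |(1 - t - A*B)/(2*t) - (1 - C*A)| ≤ 5 * |1 - 3*t| := by
  have hs0 : (0:ℝ) < 1 - 3*t := by linarith
  have hA1 : A ≤ 1 := by nlinarith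
  have hB1 : 1 ≤ B := by nlinarith
  have hC17 : 1.7 ≤ C := by nlinarith
  have hd : 0 < 2*t*C + B := by nlinarith
  have hD2 : 2 ≤ 2*t*C + B := by nlinarith
  have hh : (2*t*C - B) * (2*t*C + B) = -((1-3*t)*(4*t+1)) := by
    linear_combination (4*t^2)*hC2 - hB2
  have h1 : 2*t*C - B ≤ 0 := by nlinarith
  have h2 : -(3/2*(1-3*t)) ≤ 2*t*C - B := by nlinarith
  have key : (1 - t - A*B)/(2*t) - (1 - C*A) = (1 - 3*t + A*(2*t*C - B))/(2*t) := by
    field_simp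
    ring
  rw [key, abs_div, abs_of_pos (show (0:ℝ) < 2*t by linarith),
    abs_of_pos hs0, div_le_iff₀ (show (0:ℝ) < 2*t by linarith)]
  have hup : A*(2*t*C - B) ≤ 0 := mul_nonpos_of_nonneg_of_nonpos hA0 h1
  have hlo : -(3/2*(1-3*t)) ≤ A*(2*t*C - B) := by
    nlinarith [mul_nonneg hA0 (show (0:ℝ) ≤ 2*t*C - B + 3/2*(1-3*t) by linarith),
      mul_nonneg (show (0:ℝ) ≤ 1 - A by linarith) hs0.le]
  have hnum : |1 - 3*t + A*(2*t*C - B)| ≤ 5/2*(1-3*t) := by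
    rw [abs_le]; constructor <;> linarith
  calc |1 - 3*t + A*(2*t*C - B)| ≤ 5/2*(1-3*t) := hnum
    _ ≤ 5 * (1-3*t) * (2*t) := by nlinarith

private lemma motzkin_estimate (t : ℝ) (ht0 : 3/10 < t) (ht : t < 1/3) :
    |(1 - t - Real.sqrt ((1-3*t)*(1+t)))/(2*t) - (1 - Real.sqrt 3 * Real.sqrt (1-3*t))|
      ≤ 5 * |1 - 3*t| := by
  have hs0 : (0:ℝ) < 1 - 3*t := by linarith
  rw [Real.sqrt_mul hs0.le]
  exact motzkin_est_core t (Real.sqrt (1-3*t)) (Real.sqrt (1+t)) (Real.sqrt 3) ht0 ht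
    (Real.sqrt_nonneg _) (Real.sqrt_nonneg _) (Real.sqrt_nonneg _)
    (Real.sq_sqrt hs0.le) (Real.sq_sqrt (by linarith)) (Real.sq_sqrt (by norm_num))

private lemma extract12 {α : Type*} [AddCommGroup α] [TopologicalSpace α] [IsTopologicalAddGroup α]
    [T2Space α] (f : ℕ → α) (hf : Summable f) :
    Summable (fun n => if n = 1 then 0 else if n = 2 then 0 else f n) ∧
    ∑' n, f n = f 1 + f 2 + ∑' n, (if n = 1 then 0 else if n = 2 then 0 else f n) := by
  have hS1 : Summable (Function.update f 1 0) := hf.update 1 0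
  have hS2 : Summable (Function.update (Function.update f 1 0) 2 0) := hS1.update 2 0
  have heq : (fun n => if n = 1 then 0 else if n = 2 then 0 else f n)
      = Function.update (Function.update f 1 0) 2 0 := by
    funext n
    simp only [Function.update_apply]
    split_ifs <;> simp_all
  constructor
  · rw [heq]; exact hS2
  · rw [Summable.tsum_eq_add_tsum_ite hf 1, heq]
    have h2 : (fun n => if n = 1 then (0:α) else f n) = Function.update f 1 0 := by
      funext n; simp [Function.update_apply]
    rw [h2, Summable.tsum_eq_add_tsum_ite hS1 2]
    have h3 : (fun n => if n = 2 then (0:α) else Function.update f 1 0 n)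
        = Function.update (Function.update f 1 0) 2 0 := by
      funext n; simp [Function.update_apply]
    rw [h3, Function.update_apply]
    norm_num [add_assoc]

private lemma complex_t1t_lt (t : ℂ) (ht : ‖t‖ ≤ 1/3) (hne : t ≠ 1/3) : ‖t + t^2‖ < 4/9 := by
  set x := t.re with hx
  set y := t.im with hy
  have hre : x ≤ ‖t‖ := by
    exact Complex.re_le_norm t
  have e1 : x^2 + y^2 ≤ 1/9 := by
    have : ‖t‖^2 ≤ (1/3:ℝ)^2 := by nlinarith [norm_nonneg t]
    rw [Complex.sq_norm, Complex.normSq_apply] at this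
    nlinarith [this]
  have hxlt : x < 1/3 := by
    rcases lt_or_eq_of_le (hre.trans ht) with h | h
    · exact h
    · exfalso
      apply hne
      have hy0 : y = 0 := by nlinarith
      rw [Complex.ext_iff]
      constructor
      · rw [← hx, h]; norm_num
      · rw [← hy, hy0]; norm_num
  have hb : (1+x)^2 + y^2 < 16/9 := by nlinarith
  have hb0 : (0:ℝ) ≤ (1+x)^2 + y^2 := by positivity
  have hprod : (x^2+y^2)*((1+x)^2+y^2) < 16/81 := by
    nlinarith [mul_nonneg (show (0:ℝ) ≤ 1/9 - (x^2+y^2) by linarith) hb0]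
  have hfact : t + t^2 = t * (1 + t) := by ring
  rw [hfact, norm_mul]
  have hn1 : ‖t‖^2 = x^2 + y^2 := by
    rw [Complex.sq_norm, Complex.normSq_apply]; ring
  have hn2 : ‖1+t‖^2 = (1+x)^2 + y^2 := by
    rw [Complex.sq_norm, Complex.normSq_apply]
    simp [← hx, ← hy]
    ring
  nlinarith [norm_nonneg t, norm_nonneg (1+t), hn1, hn2, hprod,
    mul_nonneg (norm_nonneg t) (norm_nonneg (1+t))]

section

variable (a : ℕ → ℝ) (hnn : ∀ n, 0 ≤ a n)
  (hr : Summable (fun n => a n * (1/3:ℝ)^n))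
  (hSr : ∑' n, a n * (1/3:ℝ)^n ≤ 1)
  (ha1 : a 1 = 1) (ha2 : a 2 = 1)

include hnn hr hSr

private lemma motzkin_norm_term (t : ℂ) (ht : ‖t‖ ≤ 1/3) (n : ℕ) :
    ‖(a n : ℂ) * t^n‖ ≤ a n * (1/3:ℝ)^n := by
  rw [norm_mul, norm_pow, Complex.norm_real, Real.norm_eq_abs, abs_of_nonneg (hnn n)]
  have h1 : ‖t‖^n ≤ (1/3:ℝ)^n := pow_le_pow_left₀ (norm_nonneg t) ht n
  exact mul_le_mul_of_nonneg_left h1 (hnn n)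

private lemma motzkin_c_summable_norm (t : ℂ) (ht : ‖t‖ ≤ 1/3) :
    Summable (fun n => ‖(a n : ℂ) * t^n‖) :=
  Summable.of_nonneg_of_le (fun n => norm_nonneg _)
    (motzkin_norm_term a hnn hr hSr t ht) hr

private lemma motzkin_c_le_one (t : ℂ) (ht : ‖t‖ ≤ 1/3) : ‖∑' n, (a n : ℂ) * t^n‖ ≤ 1 := by
  calc ‖∑' n, (a n : ℂ) * t^n‖ ≤ ∑' n, ‖(a n : ℂ) * t^n‖ :=
        norm_tsum_le_tsum_norm (motzkin_c_summable_norm a hnn hr hSr t ht)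
    _ ≤ ∑' n, a n * (1/3:ℝ)^n :=
        Summable.tsum_le_tsum (motzkin_norm_term a hnn hr hSr t ht)
          (motzkin_c_summable_norm a hnn hr hSr t ht) hr
    _ ≤ 1 := hSr

include ha1 ha2

private lemma motzkin_c_lt_one (t : ℂ) (ht : ‖t‖ ≤ 1/3) (hne : t ≠ 1/3) :
    ‖∑' n, (a n : ℂ) * t^n‖ < 1 := by
  set g : ℕ → ℂ := fun n => (a n : ℂ) * t^n with hgdef
  have hterm := motzkin_norm_term a hnn hr hSr t ht
  have hgN : Summable (fun n => ‖g n‖) := motzkin_c_summable_norm a hnn hr hSr t ht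
  have hg : Summable g := hgN.of_norm
  obtain ⟨hg2S, hg2E⟩ := extract12 g hg
  obtain ⟨hr2S, hr2E⟩ := extract12 (fun n => a n * (1/3:ℝ)^n) hr
  have htail_norms : Summable (fun n => ‖if n = 1 then (0:ℂ) else if n = 2 then 0 else g n‖) := by
    apply Summable.of_nonneg_of_le (fun n => norm_nonneg _) _ hr
    intro n
    split_ifs with h1 h2
    · simp only [norm_zero]; exact mul_nonneg (hnn n) (by positivity)
    · simp only [norm_zero]; exact mul_nonneg (hnn n) (by positivity)
    · exact hterm n
  have htail : ‖∑' n, (if n = 1 then (0:ℂ) else if n = 2 then 0 else g n)‖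
      ≤ ∑' n, (if n = 1 then (0:ℝ) else if n = 2 then 0 else a n * (1/3:ℝ)^n) := by
    calc ‖∑' n, (if n = 1 then (0:ℂ) else if n = 2 then 0 else g n)‖
        ≤ ∑' n, ‖if n = 1 then (0:ℂ) else if n = 2 then 0 else g n‖ :=
          norm_tsum_le_tsum_norm htail_norms
      _ ≤ ∑' n, (if n = 1 then (0:ℝ) else if n = 2 then 0 else a n * (1/3:ℝ)^n) := by
          apply Summable.tsum_le_tsum _ htail_norms hr2S
          intro n
          split_ifs with h1 h2
          · simp
          · simp
          · exact hterm n
  have hg1 : g 1 = t := by rw [hgdef]; simp [ha1]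
  have hg2 : g 2 = t^2 := by rw [hgdef]; simp [ha2]
  have hr1 : a 1 * (1/3:ℝ)^1 = 1/3 := by rw [ha1]; norm_num
  have hr2 : a 2 * (1/3:ℝ)^2 = 1/9 := by rw [ha2]; norm_num
  have htailr : ∑' n, (if n = 1 then (0:ℝ) else if n = 2 then 0 else a n * (1/3:ℝ)^n)
      ≤ 1 - 4/9 := by
    have := hr2E
    rw [hr1, hr2] at this
    linarith
  have hT : ‖t + t^2‖ < 4/9 := complex_t1t_lt t ht hne
  calc ‖∑' n, g n‖
      = ‖(t + t^2) + ∑' n, (if n = 1 then (0:ℂ) else if n = 2 then 0 else g n)‖ := by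
        rw [hg2E, hg1, hg2, add_assoc]
    _ ≤ ‖t + t^2‖ + ‖∑' n, (if n = 1 then (0:ℂ) else if n = 2 then 0 else g n)‖ :=
        norm_add_le _ _
    _ < 4/9 + (1 - 4/9) := by
        apply add_lt_add_of_lt_of_le hT (htail.trans htailr)
    _ = 1 := by norm_num

end

/-- Let `U` be the power series with `U = t(1 + U + U²)`, `U(0) = 0`
(the primitive Motzkin walk series).  Writing `u` for its sum, the Puiseux
expansion `u(t) = 1 - √3 · √(1 - 3t) + O(1 - 3t)` holds at the dominant
singularity `t = 1/3` (as `t → 1/3⁻`), and `|u(t)| ≤ 1` for every complex `t`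
with `|t| ≤ 1/3`, with equality only at `t = 1/3`. -/
theorem stmt_12 (U : PowerSeries ℝ) (h0 : constantCoeff U = 0)
    (hU : U = X * (1 + U + U ^ 2))
    (u : ℝ → ℝ) (hu : ∀ t : ℝ, u t = ∑' n : ℕ, coeff n U * t ^ n)
    (uC : ℂ → ℂ) (huC : ∀ t : ℂ, uC t = ∑' n : ℕ, (coeff (R := ℝ) n U : ℂ) * t ^ n) :
    ((fun t : ℝ => u t - (1 - Real.sqrt 3 * Real.sqrt (1 - 3 * t)))
      =O[nhdsWithin (1/3) (Set.Iio (1/3))] (fun t : ℝ => 1 - 3 * t)) ∧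
    (∀ t : ℂ, ‖t‖ ≤ 1/3 → ‖uC t‖ ≤ 1 ∧ (‖uC t‖ = 1 → t = 1/3)) := by
  set a : ℕ → ℝ := fun n => coeff n U with hadef
  have h0a : a 0 = 0 := by
    rw [hadef]; simp [PowerSeries.coeff_zero_eq_constantCoeff, h0]
  have hrec : ∀ n, a (n+1) = (if n = 0 then 1 else 0) + a n
      + ∑ p ∈ antidiagonal n, a p.1 * a p.2 := by
    intro n
    have : coeff (n+1) U = coeff (n+1) (X * (1 + U + U^2)) := by rw [← hU]
    rw [PowerSeries.coeff_succ_X_mul] at this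
    rw [hadef]
    simp only []
    rw [this, map_add, map_add, PowerSeries.coeff_one, sq, PowerSeries.coeff_mul]
  have hnn : ∀ n, 0 ≤ a n := motzkin_nonneg a h0a hrec
  have hpart : ∀ N, ∑ n ∈ range N, a n * (1/3:ℝ)^n ≤ 1 := motzkin_partial a h0a hrec
  have hr : Summable (fun n => a n * (1/3:ℝ)^n) := motzkin_summable13 a hnn hpart
  have hSr : ∑' n, a n * (1/3:ℝ)^n ≤ 1 := motzkin_tsum13 a hnn hpart
  have ha1 : a 1 = 1 := motzkin_a1 a h0a hrec
  have ha2 : a 2 = 1 := motzkin_a2 a h0a hrec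
  constructor
  · -- asymptotic part
    apply IsBigO.of_bound 5
    filter_upwards [Ioo_mem_nhdsLT_of_mem
      (show (1/3:ℝ) ∈ Set.Ioc (3/10) (1/3) from ⟨by norm_num, le_refl _⟩)] with t htmem
    obtain ⟨ht1, ht2⟩ := htmem
    have ht0 : (0:ℝ) < t := by linarith
    have hclosed : u t = (1 - t - Real.sqrt ((1-3*t)*(1+t)))/(2*t) := by
      rw [hu t]
      exact motzkin_closed a h0a hrec hnn hpart t ht0 ht2
    rw [Real.norm_eq_abs, Real.norm_eq_abs, hclosed]
    have := motzkin_estimate t ht1 ht2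
    convert this using 3 <;> ring
  · -- complex part
    intro t ht
    constructor
    · rw [huC t]
      exact motzkin_c_le_one a hnn hr hSr t ht
    · intro heq
      by_contra hne
      have := motzkin_c_lt_one a hnn hr hSr ha1 ha2 t ht hne
      rw [← huC t] at this
      exact absurd heq (ne_of_lt this)
end
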